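/- Assume β > 3 and α = 1/β, and let h : L^{α,β} → L^{α,β} be h(w) = ŵ. The restriction of h to L^a = {w ∈ L^{α,β} : s(w) ∈ P^a∖{ε}} is injective and h(L^a) ⊆ L^ε ∪ L^b. -/

import Mathlib

open Filter Topology MeasureTheory ENNReal
open scoped Classical

noncomputable section

namespace AB

/-- The (α,β)-transformation `T(x) = βx + α − ⌊βx + α⌋`. -/
def T (α β : ℝ) (x : ℝ) : ℝ := β * x + α - ⌊β * x + α⌋

/-- `λ = ⌈α+β⌉ − 1`, as a natural number. -/
def lamNat (α β : ℝ) : ℕ := (⌈α + β⌉ - 1).toNat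

/-- The digit of `x ∈ [0,1)`: the index `k` with `x ∈ J_k`, namely `⌊βx + α⌋`. -/
def digit (α β : ℝ) (x : ℝ) : ℕ := (⌊β * x + α⌋).toNat

/-- The (α,β)-expansion of `x`. -/
def iSeq (α β : ℝ) (x : ℝ) : ℕ → ℕ := fun n => digit α β ((T α β)^[n] x)

/-- The one-sided (α,β)-shift: closure (in the product topology) of the set of expansions. -/
def Xab (α β : ℝ) : Set (ℕ → ℕ) :=
  closure {s | ∃ x ∈ Set.Ico (0 : ℝ) 1, s = iSeq α β x}

/-- Word of given length read in a one-sided sequence starting at position `k`. -/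
def wordN (s : ℕ → ℕ) (k len : ℕ) : List ℕ := (List.range len).map fun i => s (k + i)

/-- The language of the (α,β)-shift: finite words appearing in points of `Xab`. -/
def Lang (α β : ℝ) : Set (List ℕ) :=
  {w | ∃ s ∈ Xab α β, ∃ k : ℕ, w = wordN s k w.length}

/-- `a = i_{α,β}(0)`. -/
def aSeq (α β : ℝ) : ℕ → ℕ := iSeq α β 0

/-- The prefix of length `l` of a sequence, as a word. -/
def pre (s : ℕ → ℕ) (l : ℕ) : List ℕ := (List.range l).map s

/-- Lexicographic (non-strict) order on words. -/
def wordLe (u v : List ℕ) : Prop := u = v ∨ List.Lex (· < ·) u v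

/-- Lexicographic (non-strict) order on one-sided sequences. -/
def seqLe (x y : ℕ → ℕ) : Prop :=
  x = y ∨ ∃ n : ℕ, (∀ i < n, x i = y i) ∧ x n < y n

/-- The largest `k ≤ |w|` such that the length-`k` suffix of `w` equals the length-`k`
prefix of `s` (this is `k1` for `s = a` and `k2` for `s = b`). -/
def kk (s : ℕ → ℕ) (w : List ℕ) : ℕ :=
  Nat.findGreatest (fun k => w.drop (w.length - k) = pre s k) w.length

/-- The set of finite prefixes of a sequence (`P^a`, `P^b`). -/
def Pset (s : ℕ → ℕ) : Set (List ℕ) := {u | ∃ l : ℕ, u = pre s l}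

/-- The distinguished suffix `s(w)`. -/
def sWord (a b : ℕ → ℕ) (w : List ℕ) : List ℕ :=
  if kk b w < kk a w then w.drop (w.length - kk a w)
  else if kk a w < kk b w then w.drop (w.length - kk b w)
  else []

/-- The hat operation on `P = P^a ∪ P^b` (for `β > 3`, `α = 1/β`). -/
def hatP (a b : ℕ → ℕ) (lam : ℕ) (u : List ℕ) : List ℕ :=
  if u = [] then []
  else if u ∈ Pset a then u.dropLast ++ [u.getLast?.getD 0 + 1]
  else if 3 ≤ u.getLast?.getD 0 then u.dropLast ++ [u.getLast?.getD 0 - 1]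
  else
    (u.set (u.length - kk a u.dropLast - 2) (u.getD (u.length - kk a u.dropLast - 2) 0 - 1)).set
      (u.length - kk a u.dropLast - 1) (lam - 1)

/-- `ŵ` for `w = v·s(w)`: replace the distinguished suffix by its hat. -/
def hatW (a b : ℕ → ℕ) (lam : ℕ) (w : List ℕ) : List ℕ :=
  w.take (w.length - (sWord a b w).length) ++ hatP a b lam (sWord a b w)

/-- `w̃`: the hat operation applied twice. -/
def tildeW (a b : ℕ → ℕ) (lam : ℕ) (w : List ℕ) : List ℕ :=
  hatW a b lam (hatW a b lam w)

/-- `z(u)` for `u ∈ P^b`. -/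
def zP (a b : ℕ → ℕ) (u : List ℕ) : ℕ :=
  if u = [] then 0
  else sSup ({k : ℕ | (u ++ pre (fun i => a (kk a u + i)) k) ∈ Pset b} ∪ {0})

/-- `z(w)` for a word `w` in the language. -/
def zW (a b : ℕ → ℕ) (w : List ℕ) : ℕ :=
  if kk a w < kk b w then zP a b (w.drop (w.length - kk b w)) else 0

/-- `z̄(n) = max{z(u) : u prefix of b, |u| ≤ n}`. -/
def zbar (a b : ℕ → ℕ) (n : ℕ) : ℕ :=
  (Finset.range (n + 1)).sup fun l => zP a b (pre b l)

/-- The natural extension `Σ^{α,β}`. -/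
def SigmaAB (α β : ℝ) : Set (ℤ → ℕ) :=
  {x | ∀ k : ℤ, (fun n : ℕ => x (k + n)) ∈ Xab α β}

/-- `σ^j` on two-sided sequences. -/
def shiftI {A : Type*} (j : ℤ) (x : ℤ → A) : ℤ → A := fun n => x (n + j)

/-- Word of given length read in a two-sided sequence starting at position `k`. -/
def wordZ (x : ℤ → ℕ) (k : ℤ) (len : ℕ) : List ℕ := (List.range len).map fun i => x (k + i)

/-- The map `g : L^{α,β} → {0,1}`. -/
def gW (a b : ℕ → ℕ) (w : List ℕ) : ℕ :=
  if kk a w = 0 ∧ 0 < kk b w ∧ b (kk b w) ≤ 1 then 0 else 1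

/-- `w^♯`: the word `w` placed at positions `k,…,k+|w|−1`, followed by `g(w)` at
position `k+|w|`, and `1` at all other positions. -/
def wSharp (a b : ℕ → ℕ) (k : ℤ) (w : List ℕ) : ℤ → ℕ :=
  fun j => if k ≤ j ∧ j < k + w.length then w.getD (j - k).toNat 1
           else if j = k + w.length then gW a b w else 1

/-- The finite approximation sets `E^n ⊆ Σ^{α,β}`. -/
def En (α β : ℝ) (b : ℕ → ℕ) (n : ℕ) : Set (ℤ → ℕ) :=
  {x | wordZ x (-(n : ℤ)) (2 * n + 1) ∈ Lang α β ∧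
       x ((n : ℤ) + 1) = gW (aSeq α β) b (wordZ x (-(n : ℤ)) (2 * n + 1)) ∧
       ∀ j : ℤ, j < -(n : ℤ) ∨ (n : ℤ) + 1 < j → x j = 1}

/-- `s(x_k^-) = ε` for the left-infinite word `x_{(-∞,k-1]}`: no nonempty suffix of it is a
prefix of `a` or of `b`. -/
def leftStar (a b : ℕ → ℕ) (x : ℤ → ℕ) (k : ℤ) : Prop :=
  (∀ K : ℕ, 1 ≤ K → ¬ ∀ i : ℕ, i < K → x (k - K + i) = a i) ∧
  (∀ K : ℕ, 1 ≤ K → ¬ ∀ i : ℕ, i < K → x (k - K + i) = b i)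

/-- `E^n_{[k,l]}(v)`. -/
def EnCyl (α β : ℝ) (b : ℕ → ℕ) (n : ℕ) (k l : ℤ) (v : List ℕ) : Set (ℤ → ℕ) :=
  {x ∈ En α β b n | wordZ x k (l - k + 1).toNat = v}

/-- `E^{*,n}_{[k,l]}(v)`. -/
def EnCylStar (α β : ℝ) (b : ℕ → ℕ) (n : ℕ) (k l : ℤ) (v : List ℕ) : Set (ℤ → ℕ) :=
  {x ∈ EnCyl α β b n k l v | leftStar (aSeq α β) b x k}

/-- The Birkhoff sum `∑_{j=−n}^{n} φ(σ^j x)`. -/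
def birkhoff (φ : (ℤ → ℕ) → ℝ) (n : ℕ) (x : ℤ → ℕ) : ℝ :=
  ∑ j ∈ Finset.Icc (-(n : ℤ)) (n : ℤ), φ (shiftI j x)

/-- `Ξ^n_{[k,l]}(v)`. -/
def Xi (α β : ℝ) (b : ℕ → ℕ) (φ : (ℤ → ℕ) → ℝ) (n : ℕ) (k l : ℤ) (v : List ℕ) : ℝ :=
  ∑' x : (EnCyl α β b n k l v), Real.exp (birkhoff φ n x.1)

/-- `Ξ^{*,n}_{[k,l]}(v)`. -/
def XiStar (α β : ℝ) (b : ℕ → ℕ) (φ : (ℤ → ℕ) → ℝ) (n : ℕ) (k l : ℤ) (v : List ℕ) : ℝ :=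
  ∑' x : (EnCylStar α β b n k l v), Real.exp (birkhoff φ n x.1)

/-- `δ_i(f)`, as an extended nonnegative real. -/
def oscE {A : Type*} (f : (ℤ → A) → ℝ) (i : ℤ) : ℝ≥0∞ :=
  ⨆ (x : ℤ → A) (y : ℤ → A) (_ : ∀ k : ℤ, k ≠ i → x k = y k), ENNReal.ofReal |f x - f y|

/-- `‖f‖_δ` for a function on the full shift. -/
def enormFull {A : Type*} (f : (ℤ → A) → ℝ) : ℝ≥0∞ := ∑' i : ℤ, oscE f i

/-- `‖f‖_δ` for a function on a subshift `X`: infimum over continuous extensions. -/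
def enormOn {A : Type*} [TopologicalSpace A] (X : Set (ℤ → A)) (f : (ℤ → A) → ℝ) : ℝ≥0∞ :=
  ⨅ (g : (ℤ → A) → ℝ) (_ : Continuous g) (_ : ∀ x ∈ X, g x = f x), enormFull g

/-- `f` has bounded total oscillations on `X` (i.e. `f ∈ B(X)`). -/
def BTO {A : Type*} [TopologicalSpace A] (X : Set (ℤ → A)) (f : (ℤ → A) → ℝ) : Prop :=
  ContinuousOn f X ∧ enormOn X f ≠ ⊤

/-- The real value of `‖f‖_δ`. -/
def dnorm {A : Type*} [TopologicalSpace A] (X : Set (ℤ → A)) (f : (ℤ → A) → ℝ) : ℝ :=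
  (enormOn X f).toReal

/-- The pressure `p(φ)`. -/
def pressure (α β : ℝ) (b : ℕ → ℕ) (φ : (ℤ → ℕ) → ℝ) : ℝ :=
  limUnder atTop fun n : ℕ =>
    Real.log (∑' x : (En α β b n), Real.exp (birkhoff φ n x.1)) / (2 * n + 1)

/-- `ν` is a tangent functional to the pressure at `φ` (an equilibrium measure for `φ`). -/
def IsTangent (α β : ℝ) (b : ℕ → ℕ) (φ : (ℤ → ℕ) → ℝ) (ν : Measure (ℤ → ℕ)) : Prop :=
  ∀ f : (ℤ → ℕ) → ℝ, ContinuousOn f (SigmaAB α β) →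
    pressure α β b φ + ∫ x, f x ∂ν ≤ pressure α β b (fun x => φ x + f x)

/-- The cylinder `[x_1 … x_m]` in `Σ^{α,β}`. -/
def cyl (α β : ℝ) (x : ℤ → ℕ) (m : ℕ) : Set (ℤ → ℕ) :=
  {y ∈ SigmaAB α β | ∀ i : ℕ, 1 ≤ i → i ≤ m → y (i : ℤ) = x (i : ℤ)}

/-- `ν` is a weak Gibbs measure for `ψ` on `Σ^{α,β}`. -/
def WeakGibbs (α β : ℝ) (ν : Measure (ℤ → ℕ)) (ψ : (ℤ → ℕ) → ℝ) : Prop :=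
  ∀ δ : ℝ, 0 < δ → ∃ N : ℕ, ∀ m : ℕ, N ≤ m → ∀ x ∈ SigmaAB α β,
    |Real.log (ν (cyl α β x m)).toReal / m -
      (∑ l ∈ Finset.Icc (1 : ℤ) (m : ℤ), ψ (shiftI l x)) / m| ≤ δ


/-- Concatenation `w·x` of a word and a one-sided sequence. -/
def wordApp (w : List ℕ) (x : ℕ → ℕ) : ℕ → ℕ :=
  fun n => if n < w.length then w.getD n 1 else x (n - w.length)

/-- `σ^k` on one-sided sequences. -/
def shiftN (k : ℕ) (s : ℕ → ℕ) : ℕ → ℕ := fun n => s (k + n)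

end AB

namespace AB

variable {α β : ℝ} {b : ℕ → ℕ}

lemma hb0 (hβ : 3 < β) : (0:ℝ) < β := by linarith
lemma halpha (hβ : 3 < β) (hα : α = 1/β) : 0 < α ∧ α < 1 ∧ β * α = 1 := by
  subst hα
  refine ⟨by positivity, ?_, by field_simp⟩
  rw [div_lt_one (by linarith)]; linarith

lemma T_eq_fract (x : ℝ) : T α β x = Int.fract (β * x + α) := rfl

lemma T_mem (x : ℝ) : T α β x ∈ Set.Ico (0:ℝ) 1 := by
  rw [T_eq_fract]; exact ⟨Int.fract_nonneg _, Int.fract_lt_one _⟩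

lemma iter_mem {y : ℝ} (hy : y ∈ Set.Ico (0:ℝ) 1) (i : ℕ) :
    (T α β)^[i] y ∈ Set.Ico (0:ℝ) 1 := by
  cases i with
  | zero => exact hy
  | succ n =>
    rw [Function.iterate_succ_apply']
    exact T_mem _

lemma digit_eq_iff (hβ : 3 < β) (hα : α = 1/β) {u : ℝ} (hu : 0 ≤ u) (c : ℕ) :
    digit α β u = c ↔ ((c:ℝ) ≤ β * u + α ∧ β * u + α < c + 1) := by
  obtain ⟨hα0, hα1, hβα⟩ := halpha hβ hα
  have hval : (0:ℝ) ≤ β * u + α := by nlinarith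
  have hfl : (0:ℤ) ≤ ⌊β * u + α⌋ := Int.floor_nonneg.mpr hval
  constructor
  · intro h
    have : (⌊β * u + α⌋ : ℤ) = (c : ℤ) := by
      rw [← h]; simp [digit, Int.toNat_of_nonneg hfl]
    have hle := Int.floor_le (β * u + α)
    have h2 := Int.lt_floor_add_one (β * u + α)
    rw [this] at hle h2
    push_cast at hle h2
    exact ⟨hle, by linarith⟩
  · rintro ⟨h1, h2⟩
    have : ⌊β * u + α⌋ = (c : ℤ) := by
      apply Int.floor_eq_iff.mpr
      constructor <;> push_cast <;> [exact h1; exact h2]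
    simp [digit, this]

lemma digit_bounds (hβ : 3 < β) (hα : α = 1/β) {u : ℝ} (hu : 0 ≤ u) :
    ((digit α β u : ℝ)) ≤ β * u + α ∧ β * u + α < digit α β u + 1 :=
  (digit_eq_iff hβ hα hu _).mp rfl

lemma orbit_step (hβ : 3 < β) (hα : α = 1/β) {y : ℝ} (hy : y ∈ Set.Ico (0:ℝ) 1) (j : ℕ) :
    (T α β)^[j+1] y = β * (T α β)^[j] y + α - (iSeq α β y j : ℝ) := by
  obtain ⟨hα0, hα1, hβα⟩ := halpha hβ hα
  have hyj := iter_mem (α:=α) (β:=β) hy j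
  have hval : (0:ℝ) ≤ β * (T α β)^[j] y + α := by nlinarith [hyj.1]
  have : ((iSeq α β y j : ℤ) : ℝ) = (⌊β * (T α β)^[j] y + α⌋ : ℝ) := by
    simp only [iSeq, digit]
    rw [Int.toNat_of_nonneg (Int.floor_nonneg.mpr hval)]
  rw [Function.iterate_succ_apply', T]
  push_cast at this ⊢
  rw [← this]

lemma iter_zero (hβ : 3 < β) (hα : α = 1/β) (i : ℕ) :
    (T α β)^[i] (0:ℝ) = if i = 0 then 0 else α := by
  obtain ⟨hα0, hα1, hβα⟩ := halpha hβ hα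
  induction i with
  | zero => simp
  | succ n ih =>
    rw [Function.iterate_succ_apply', ih]
    rcases Nat.eq_zero_or_pos n with h | h
    · simp [h, T]
      exact ⟨le_of_lt hα0, hα1⟩
    · have : ¬ n = 0 := Nat.pos_iff_ne_zero.mp h
      simp [this, T, hβα]
      exact ⟨le_of_lt hα0, hα1⟩

lemma aSeq_vals (hβ : 3 < β) (hα : α = 1/β) :
    aSeq α β 0 = 0 ∧ ∀ i, 1 ≤ i → aSeq α β i = 1 := by
  obtain ⟨hα0, hα1, hβα⟩ := halpha hβ hα
  constructor
  · rw [aSeq, iSeq]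
    simp only [Function.iterate_zero, id_eq]
    rw [digit_eq_iff hβ hα le_rfl]
    norm_num
    constructor <;> linarith
  · intro i hi
    rw [aSeq, iSeq, iter_zero hβ hα, if_neg (by omega),
      digit_eq_iff hβ hα (le_of_lt hα0)]
    rw [hβα]; push_cast; constructor <;> linarith

def tSeq (α β : ℝ) (b : ℕ → ℕ) : ℕ → ℝ
  | 0 => 1
  | r + 1 => β * tSeq α β b r + α - b r

lemma hb_digit {b : ℕ → ℕ}
    (hb : Tendsto (iSeq α β) (𝓝[<] (1 : ℝ)) (𝓝 b)) (r : ℕ) :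
    ∃ c : ℝ, 0 ≤ c ∧ c < 1 ∧ ∀ x, c < x → x < 1 → iSeq α β x r = b r := by
  have h := (tendsto_pi_nhds.mp hb) r
  have hev : ∀ᶠ x in 𝓝[<] (1:ℝ), iSeq α β x r = b r := by
    have hmem : {b r} ∈ 𝓝 (b r) := (isOpen_discrete {b r}).mem_nhds rfl
    filter_upwards [h hmem] with x hx using hx
  rw [eventually_iff, mem_nhdsLT_iff_exists_Ioo_subset] at hev
  obtain ⟨c, hc1, hc⟩ := hev
  refine ⟨max c 0, le_max_right _ _, by simp only [max_lt_iff]; exact ⟨hc1, one_pos⟩, ?_⟩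
  intro x hx hx1
  exact hc ⟨lt_of_le_of_lt (le_max_left c 0) hx, hx1⟩

lemma tSeq_affine (hβ : 3 < β) (hα : α = 1/β)
    (hb : Tendsto (iSeq α β) (𝓝[<] (1 : ℝ)) (𝓝 b)) (r : ℕ) :
    ∃ c : ℝ, 0 ≤ c ∧ c < 1 ∧ ∀ x, c < x → x < 1 →
      (T α β)^[r] x = tSeq α β b r + β ^ r * (x - 1) := by
  obtain ⟨hα0, hα1, hβα⟩ := halpha hβ hα
  induction r with
  | zero => exact ⟨0, le_rfl, one_pos, fun x _ _ => by simp [tSeq]⟩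
  | succ r ih =>
    obtain ⟨c, hc0, hc1, haff⟩ := ih
    obtain ⟨cb, hcb0, hcb1, hdig⟩ := hb_digit hb r
    refine ⟨max c cb, le_trans hc0 (le_max_left _ _), by simp [max_lt_iff]; exact ⟨hc1, hcb1⟩, ?_⟩
    intro x hx hx1
    have hxc : c < x := lt_of_le_of_lt (le_max_left _ _) hx
    have hxcb : cb < x := lt_of_le_of_lt (le_max_right _ _) hx
    have hxI : x ∈ Set.Ico (0:ℝ) 1 := ⟨le_of_lt (lt_of_le_of_lt hc0 hxc), hx1⟩
    have hstep := orbit_step hβ hα hxI r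
    rw [hstep, hdig x hxcb hx1, haff x hxc hx1, tSeq]
    push_cast
    ring

lemma tSeq_window (hβ : 3 < β) (hα : α = 1/β)
    (hb : Tendsto (iSeq α β) (𝓝[<] (1 : ℝ)) (𝓝 b)) (r : ℕ) :
    (b r : ℝ) < β * tSeq α β b r + α ∧ β * tSeq α β b r + α ≤ b r + 1 := by
  obtain ⟨hα0, hα1, hβα⟩ := halpha hβ hα
  have hβ0 : (0:ℝ) < β := by linarith
  obtain ⟨c, hc0, hc1, haff⟩ := tSeq_affine hβ hα hb r
  obtain ⟨cb, hcb0, hcb1, hdig⟩ := hb_digit hb r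
  set c' := max c cb with hc'
  have hc'0 : 0 ≤ c' := le_trans hc0 (le_max_left _ _)
  have hc'1 : c' < 1 := by simp [hc', max_lt_iff]; exact ⟨hc1, hcb1⟩
  have key : ∀ x, c' < x → x < 1 →
      (b r : ℝ) ≤ β * tSeq α β b r + α - β^(r+1) * (1-x) ∧
      β * tSeq α β b r + α - β^(r+1) * (1-x) < b r + 1 := by
    intro x hx hx1
    have hxc : c < x := lt_of_le_of_lt (le_max_left _ _) hx
    have hxcb : cb < x := lt_of_le_of_lt (le_max_right _ _) hx
    have hxI : x ∈ Set.Ico (0:ℝ) 1 := ⟨le_of_lt (lt_of_le_of_lt hc'0 hx), hx1⟩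
    have hrx := iter_mem (α:=α) (β:=β) hxI r
    have hbd := digit_bounds hβ hα hrx.1
    have hde : digit α β ((T α β)^[r] x) = b r := hdig x hxcb hx1
    rw [hde] at hbd
    have haffx := haff x hxc hx1
    have : β * (T α β)^[r] x + α = β * tSeq α β b r + α - β^(r+1) * (1-x) := by
      rw [haffx]; ring
    rw [this] at hbd
    exact ⟨hbd.1, hbd.2⟩
  have hx0 : c' < (c'+1)/2 ∧ (c'+1)/2 < 1 := by constructor <;> linarith
  constructor
  · have := (key _ hx0.1 hx0.2).1
    have hpos : 0 < β^(r+1) * (1 - (c'+1)/2) := by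
      apply mul_pos (pow_pos hβ0 _); linarith
    linarith
  · by_contra h
    push_neg at h
    set ε := β * tSeq α β b r + α - ((b r : ℝ) + 1) with hε
    have hεpos : 0 < ε := by linarith
    set x1 := max c' (1 - ε / β^(r+1)) with hx1def
    have hx1lt : x1 < 1 := by
      simp [hx1def, max_lt_iff]
      constructor
      · exact hc'1
      · have : 0 < ε / β^(r+1) := div_pos hεpos (pow_pos hβ0 _)
        linarith
    have hx2 : x1 < (x1+1)/2 ∧ (x1+1)/2 < 1 := by constructor <;> linarith
    have hgt : c' < (x1+1)/2 := lt_of_le_of_lt (le_max_left _ _) hx2.1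
    have h2 := (key _ hgt hx2.2).2
    have hsmall : β^(r+1) * (1 - (x1+1)/2) < ε := by
      have h3 : 1 - ε / β^(r+1) ≤ x1 := le_max_right _ _
      have h4 : 1 - (x1+1)/2 < 1 - x1 := by linarith
      have h5 : 1 - x1 ≤ ε / β^(r+1) := by linarith
      calc β^(r+1) * (1 - (x1+1)/2) < β^(r+1) * (ε / β^(r+1)) := by
            apply mul_lt_mul_of_pos_left _ (pow_pos hβ0 _)
            linarith
        _ = ε := by field_simp
    linarith

lemma b_zero_ge (hβ : 3 < β) (hα : α = 1/β)
    (hb : Tendsto (iSeq α β) (𝓝[<] (1 : ℝ)) (𝓝 b)) : 3 ≤ b 0 := by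
  obtain ⟨hα0, hα1, hβα⟩ := halpha hβ hα
  have h := (tSeq_window hβ hα hb 0).2
  simp only [tSeq] at h
  have : (2:ℝ) < (b 0 : ℝ) := by linarith
  exact_mod_cast by exact_mod_cast Nat.lt_iff_add_one_le.mp (by exact_mod_cast this)

lemma no_a_pattern (hβ : 3 < β) (hα : α = 1/β) {y : ℝ} (hy : y ∈ Set.Ico (0:ℝ) 1)
    (p m : ℕ) (h0 : iSeq α β y p = 0)
    (h1 : ∀ s, 1 ≤ s → s ≤ m → iSeq α β y (p + s) = 1) :
    1 ≤ iSeq α β y (p + m + 1) := by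
  obtain ⟨hα0, hα1, hβα⟩ := halpha hβ hα
  have hβ0 : (0:ℝ) < β := by linarith
  set z := (T α β)^[p] y with hz
  have hz0 : 0 ≤ z := (iter_mem (α:=α) (β:=β) hy p).1
  -- T^[p+s] y = β^s * z + α for 1 ≤ s ≤ m+1
  have key : ∀ s, 1 ≤ s → s ≤ m + 1 → (T α β)^[p + s] y = β ^ s * z + α := by
    intro s hs1 hsm
    induction s with
    | zero => omega
    | succ k ih =>
      rcases Nat.eq_zero_or_pos k with hk | hk
      · subst hk
        have := orbit_step hβ hα hy p
        rw [h0] at this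
        simpa using this
      · have hkm : k ≤ m := by omega
        have ihk := ih hk (by omega)
        have hstep := orbit_step hβ hα hy (p + k)
        rw [show p + (k+1) = (p+k) + 1 by ring, hstep, h1 k hk hkm, ihk]
        push_cast
        ring_nf
        ring_nf at hβα
        nlinarith [hβα]
  have hval := key (m+1) (by omega) le_rfl
  have hy1 : 1 ≤ iSeq α β y (p + (m+1)) := by
    rw [iSeq, hval]
    have hnn : (0:ℝ) ≤ β ^ (m+1) * z + α := by positivity
    have h2 : (1:ℝ) ≤ β * (β ^ (m+1) * z + α) + α := by
      have : β * (β ^ (m+1) * z + α) + α = β ^ (m+2) * z + 1 + α := by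
        rw [mul_add, ← hβα]; ring
      rw [this]
      have : (0:ℝ) ≤ β ^ (m+2) * z := by positivity
      linarith
    rw [digit]
    have hfl : (1:ℤ) ≤ ⌊β * (β ^ (m+1) * z + α) + α⌋ := by
      exact_mod_cast Int.le_floor.mpr (by exact_mod_cast h2)
    omega
  simpa [show p + (m+1) = p + m + 1 by ring] using hy1

@[simp] lemma pre_length (s : ℕ → ℕ) (l : ℕ) : (pre s l).length = l := by simp [pre]
@[simp] lemma wordN_length (s : ℕ → ℕ) (k len : ℕ) : (wordN s k len).length = len := by
  simp [wordN]
lemma pre_getElem (s : ℕ → ℕ) (l j : ℕ) (h : j < (pre s l).length) : (pre s l)[j] = s j := by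
  simp [pre]
lemma wordN_getElem (s : ℕ → ℕ) (k len j : ℕ) (h : j < (wordN s k len).length) :
    (wordN s k len)[j] = s (k + j) := by simp [wordN]

/-- Extraction: every word in the language is an expansion prefix of a point. -/
lemma lang_extract {w : List ℕ} (hw : w ∈ Lang α β) :
    ∃ y ∈ Set.Ico (0:ℝ) 1, ∀ j (h : j < w.length), w[j] = iSeq α β y j := by
  obtain ⟨s, hs, k, hwEq⟩ := hw
  set n := w.length with hn
  set U : Set (ℕ → ℕ) := ⋂ j ∈ Finset.range n, {s' : ℕ → ℕ | s' (k + j) = s (k + j)} with hU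
  have hUopen : IsOpen U := by
    apply isOpen_biInter_finset
    intro j _
    have : IsOpen ((fun s' : ℕ → ℕ => s' (k+j)) ⁻¹' {s (k+j)}) :=
      (isOpen_discrete _).preimage (continuous_apply (k + j))
    exact this
  have hsU : s ∈ U := by simp [hU]
  obtain ⟨s', hs'U, x, hx, hs'⟩ := mem_closure_iff.mp hs U hUopen hsU
  refine ⟨(T α β)^[k] x, iter_mem hx k, ?_⟩
  intro j hj
  have h1 : s' (k + j) = s (k + j) := Set.mem_iInter₂.mp hs'U j (Finset.mem_range.mpr hj)
  have h2 : w[j]? = some (s (k + j)) := by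
    conv_lhs => rw [hwEq]
    rw [List.getElem?_eq_getElem (by simpa using hj)]
    rw [wordN_getElem]
  have h3 : w[j] = s (k + j) := by
    rw [List.getElem?_eq_getElem hj] at h2
    exact Option.some.inj h2
  rw [h3, ← h1, hs']
  simp only [iSeq]
  rw [← Function.iterate_add_apply]
  rw [Nat.add_comm j k]

/-- Membership: expansion prefixes of points of [0,1) are in the language. -/
lemma lang_of_point {w : List ℕ} {y : ℝ} (hy : y ∈ Set.Ico (0:ℝ) 1)
    (h : ∀ j (hj : j < w.length), w[j] = iSeq α β y j) : w ∈ Lang α β := by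
  refine ⟨iSeq α β y, subset_closure ⟨y, hy, rfl⟩, 0, ?_⟩
  apply List.ext_getElem (by simp)
  intro j h1 h2
  rw [wordN_getElem, h j h1, Nat.zero_add]

/-- suffix-matching characterization -/
lemma drop_eq_pre_iff {w : List ℕ} {s : ℕ → ℕ} {K : ℕ} (hK : K ≤ w.length) :
    w.drop (w.length - K) = pre s K ↔
      ∀ j, j < K → ∀ (h : w.length - K + j < w.length), w[w.length - K + j] = s j := by
  constructor
  · intro h j hj hlt
    have := congrArg (fun l => l[j]?) h
    rw [List.getElem?_drop] at this
    rw [List.getElem?_eq_getElem hlt] at this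
    have h2 : j < (pre s K).length := by simp [hj]
    rw [List.getElem?_eq_getElem h2] at this
    simp only [Option.some_inj] at this
    rw [this, pre_getElem]
  · intro h
    apply List.ext_getElem (by simp [List.length_drop]; omega)
    intro j h1 h2
    rw [List.getElem_drop, pre_getElem]
    exact h j (by simpa using h2) _

lemma core (hβ : 3 < β) (hα : α = 1/β)
    (hb : Tendsto (iSeq α β) (𝓝[<] (1 : ℝ)) (𝓝 b))
    {y : ℝ} (hy : y ∈ Set.Ico (0:ℝ) 1) {n l : ℕ}
    (hn : 1 ≤ n) (hl1 : 1 ≤ l) (hln : l ≤ n)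
    (hsa : ∀ s, s < l → iSeq α β y (n - l + s) = aSeq α β s)
    (hk2 : ∀ K, l < K → K ≤ n → ¬ (∀ s, s < K → iSeq α β y (n - K + s) = b s)) :
    ∃ x' ∈ Set.Ico (0:ℝ) 1, (∀ j, j < n - 1 → iSeq α β x' j = iSeq α β y j) ∧
      iSeq α β x' (n-1) = iSeq α β y (n-1) + 1 := by
  obtain ⟨hα0, hα1, hβα⟩ := halpha hβ hα
  have hβ0 : (0:ℝ) < β := by linarith
  set ξ : ℕ → ℝ → ℝ := fun i x => (T α β)^[i] y + β ^ i * (x - y) with hξ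
  set Bf : ℕ → ℝ := fun i => y + (1 - (T α β)^[i] y) / β ^ i with hBf
  have hξy : ∀ i, ξ i y = (T α β)^[i] y := by intro i; simp [hξ]
  have hξBf : ∀ i, ξ i (Bf i) = 1 := by
    intro i
    have : (β:ℝ)^i ≠ 0 := ne_of_gt (pow_pos hβ0 i)
    simp only [hξ, hBf]
    field_simp
    ring
  have hBfy : ∀ i, y < Bf i := by
    intro i
    have h1 : (T α β)^[i] y < 1 := (iter_mem (α:=α) (β:=β) hy i).2
    have : 0 < (1 - (T α β)^[i] y) / β ^ i := div_pos (by linarith) (pow_pos hβ0 i)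
    simp only [hBf]; linarith
  have hξmono : ∀ i {u v : ℝ}, u < v → ξ i u < ξ i v := by
    intro i u v huv
    simp only [hξ]
    have := pow_pos hβ0 i
    nlinarith
  have hξmono' : ∀ i {u v : ℝ}, u ≤ v → ξ i u ≤ ξ i v := by
    intro i u v huv
    simp only [hξ]
    have := pow_pos hβ0 i
    nlinarith
  have hξrec : ∀ i x, ξ (i+1) x = β * ξ i x + α - (iSeq α β y i : ℝ) := by
    intro i x
    simp only [hξ]
    rw [orbit_step hβ hα hy i]
    ring
  have hBf0 : Bf 0 = 1 := by simp [hBf]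
  by_cases hcase : ∀ i, i ≤ n - 1 → Bf n < Bf i
  · -- Case A: construct x'
    set x' := Bf n with hx'
    have hx'y : y < x' := hBfy n
    have hx'0 : 0 ≤ x' := le_of_lt (lt_of_le_of_lt hy.1 hx'y)
    have hx'1 : x' < 1 := by
      have := hcase 0 (Nat.zero_le _)
      rwa [hBf0] at this
    have hx'I : x' ∈ Set.Ico (0:ℝ) 1 := ⟨hx'0, hx'1⟩
    have hξnx' : ξ n x' = 1 := hξBf n
    -- digit helper
    have hdig : ∀ i, i < n - 1 → (T α β)^[i] x' = ξ i x' → iSeq α β x' i = iSeq α β y i := by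
      intro i hi hTi
      have hTi0 : 0 ≤ (T α β)^[i] x' := (iter_mem (α:=α) (β:=β) hx'I i).1
      have hlow : (iSeq α β y i : ℝ) ≤ β * ξ i x' + α := by
        have h1 := (digit_bounds hβ hα (iter_mem (α:=α) (β:=β) hy i).1).1
        have h2 : ξ i y < ξ i x' := hξmono i hx'y
        rw [hξy i] at h2
        have : (iSeq α β y i : ℝ) ≤ β * (T α β)^[i] y + α := h1
        nlinarith
      have hupp : β * ξ i x' + α < (iSeq α β y i : ℝ) + 1 := by
        have h1 : ξ (i+1) x' < 1 := by
          have h2 : x' < Bf (i+1) := hcase (i+1) (by omega)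
          have := hξmono (i+1) h2
          rwa [hξBf (i+1)] at this
        have h3 := hξrec i x'
        linarith
      rw [iSeq, hTi]
      rw [digit_eq_iff hβ hα (by rw [← hTi]; exact hTi0)]
      exact ⟨hlow, hupp⟩
    have hiter : ∀ i, i ≤ n - 1 → (T α β)^[i] x' = ξ i x' := by
      intro i
      induction i with
      | zero => intro _; simp [hξ]
      | succ k ih =>
        intro hk
        have hk' : k ≤ n - 1 := by omega
        have hkn : k < n - 1 := by omega
        have hTk := ih hk'
        rw [Function.iterate_succ_apply', T]
        have hdigk := hdig k hkn hTk
        have : (⌊β * (T α β)^[k] x' + α⌋ : ℝ) = (iSeq α β x' k : ℝ) := by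
          have h0 : 0 ≤ β * (T α β)^[k] x' + α := by
            have := (iter_mem (α:=α) (β:=β) hx'I k).1; nlinarith
          simp only [iSeq, digit]
          have h1 := Int.toNat_of_nonneg (Int.floor_nonneg.mpr h0)
          exact_mod_cast h1.symm
        rw [this, hdigk, hTk, hξrec k x']
    -- conclude
    refine ⟨x', hx'I, ?_, ?_⟩
    · intro j hj
      exact hdig j hj (hiter j (by omega))
    · have hT := hiter (n-1) le_rfl
      have hval : β * ξ (n-1) x' + α = (iSeq α β y (n-1) : ℝ) + 1 := by
        have := hξrec (n-1) x'
        rw [show n - 1 + 1 = n by omega, hξnx'] at this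
        linarith
      rw [iSeq, hT]
      rw [digit_eq_iff hβ hα (by rw [← hT]; exact (iter_mem (α:=α) (β:=β) hx'I (n-1)).1)]
      push_cast
      constructor
      · rw [hval]
      · rw [hval]; linarith
  · -- Case B: contradiction
    exfalso
    push_neg at hcase
    obtain ⟨i₀, hi₀n, hi₀⟩ := hcase
    obtain ⟨istar, histar, hmin'⟩ := Finset.exists_min_image (Finset.range n) Bf
      ⟨i₀, Finset.mem_range.mpr (by omega)⟩
    rw [Finset.mem_range] at histar
    have hmin : ∀ i, i ≤ n → Bf istar ≤ Bf i := by
      intro i hi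
      rcases Nat.lt_or_ge i n with h | h
      · exact hmin' i (Finset.mem_range.mpr h)
      · have : i = n := by omega
        subst this
        exact le_trans (hmin' i₀ (Finset.mem_range.mpr (by omega))) hi₀
    set q := Bf istar with hq
    set K := n - istar with hK
    have hK1 : 1 ≤ K := by omega
    have hKn : K ≤ n := by omega
    have hqy : y < q := hBfy istar
    have hdigr : ∀ r, r < K → ξ (istar + r) q = tSeq α β b r →
        iSeq α β y (istar + r) = b r ∧ ξ (istar + (r+1)) q = tSeq α β b (r+1) := by
      intro r hrK hPr
      have hup : ξ (istar + (r + 1)) q ≤ 1 := by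
        have h1 : q ≤ Bf (istar + (r + 1)) := hmin _ (by omega)
        have := hξmono' (istar + (r + 1)) h1
        rwa [hξBf] at this
      have hlo : 0 < ξ (istar + (r + 1)) q := by
        have h1 := hξmono (istar + (r + 1)) hqy
        rw [hξy] at h1
        have := (iter_mem (α:=α) (β:=β) hy (istar + (r + 1))).1
        linarith
      have hrec : ξ (istar + (r+1)) q = β * tSeq α β b r + α - (iSeq α β y (istar + r) : ℝ) := by
        rw [show istar + (r+1) = (istar + r) + 1 by omega, hξrec (istar + r) q, hPr]
      set c := iSeq α β y (istar + r) with hc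
      obtain ⟨hw1, hw2⟩ := tSeq_window hβ hα hb r
      have hc1 : (c:ℝ) < β * tSeq α β b r + α := by
        rw [hrec] at hlo; linarith
      have hc2 : β * tSeq α β b r + α ≤ (c:ℝ) + 1 := by
        rw [hrec] at hup; linarith
      have hcb : c = b r := by
        have h1 : (c:ℝ) < (b r : ℝ) + 1 := lt_of_lt_of_le hc1 hw2
        have h2 : (b r : ℝ) < (c:ℝ) + 1 := lt_of_lt_of_le hw1 hc2
        have h3 : c < b r + 1 := by exact_mod_cast (by push_cast; linarith : (c:ℝ) < ((b r : ℕ):ℝ) + 1)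
        have h4 : b r < c + 1 := by exact_mod_cast (by push_cast; linarith : ((b r:ℕ):ℝ) < ((c : ℕ):ℝ) + 1)
        omega
      refine ⟨hcb, ?_⟩
      rw [hrec, hcb, tSeq]
    have claimP : ∀ r, r ≤ K → ξ (istar + r) q = tSeq α β b r := by
      intro r
      induction r with
      | zero =>
        intro _
        simpa [tSeq] using hξBf istar
      | succ r ih =>
        intro hrK
        exact (hdigr r (by omega) (ih (by omega))).2
    have claimD : ∀ r, r < K → iSeq α β y (istar + r) = b r :=
      fun r hr => (hdigr r hr (claimP r (by omega))).1
    -- contradiction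
    rcases Nat.lt_or_ge l K with hlK | hKl
    · exact hk2 K hlK hKn (by
        intro s hs
        rw [show n - K + s = istar + s by omega]
        exact claimD s hs)
    · have hb3 : 3 ≤ b 0 := b_zero_ge hβ hα hb
      have h1 : iSeq α β y istar = b 0 := by simpa using claimD 0 (by omega)
      have hs : l - K < l := by omega
      have h2 := hsa (l - K) hs
      rw [show n - l + (l - K) = istar by omega] at h2
      obtain ⟨ha0, ha1⟩ := aSeq_vals hβ hα
      rcases Nat.eq_zero_or_pos (l - K) with h | h
      · rw [h, ha0] at h2
        omega
      · rw [ha1 _ h] at h2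
        omega

lemma kk_le (s : ℕ → ℕ) (w : List ℕ) : kk s w ≤ w.length := Nat.findGreatest_le _

lemma kk_spec {s : ℕ → ℕ} {w : List ℕ} (h : 0 < kk s w) :
    w.drop (w.length - kk s w) = pre s (kk s w) := by
  by_cases hall : ∀ m : ℕ, 0 < m → m ≤ w.length → ¬ (w.drop (w.length - m) = pre s m)
  · have : kk s w = 0 := by
      rw [kk]
      rw [Nat.findGreatest_eq_zero_iff (P := fun k => w.drop (w.length - k) = pre s k)
        (k := w.length)]
      intro m hm0 hmle hm
      exact hall m hm0 hmle hm
    omega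
  · push_neg at hall
    obtain ⟨m, hm0, hmle, hm⟩ := hall
    exact Nat.findGreatest_spec (P := fun k => w.drop (w.length - k) = pre s k) hmle hm

lemma kk_ge {s : ℕ → ℕ} {w : List ℕ} {K : ℕ} (hK : K ≤ w.length)
    (h : w.drop (w.length - K) = pre s K) : K ≤ kk s w := Nat.le_findGreatest hK h

/-- Branch analysis for `w ∈ Lᵃ`. -/
lemma branch (hβ : 3 < β) (hα : α = 1/β)
    (hb : Tendsto (iSeq α β) (𝓝[<] (1 : ℝ)) (𝓝 b)) {w : List ℕ}
    (hsw : sWord (aSeq α β) b w ∈ Pset (aSeq α β))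
    (hsne : sWord (aSeq α β) b w ≠ []) :
    kk b w < kk (aSeq α β) w := by
  by_cases h1 : kk b w < kk (aSeq α β) w
  · exact h1
  by_cases h2 : kk (aSeq α β) w < kk b w
  · exfalso
    have hsw' : sWord (aSeq α β) b w = w.drop (w.length - kk b w) := by
      rw [sWord, if_neg h1, if_pos h2]
    have hpos : 0 < kk b w := by omega
    have hdropb : w.drop (w.length - kk b w) = pre b (kk b w) := kk_spec hpos
    obtain ⟨l', hl'⟩ := hsw
    rw [hsw', hdropb] at hl'
    have hlen : kk b w = l' := by
      have := congrArg List.length hl'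
      simpa using this
    subst hlen
    have h0 : b 0 = aSeq α β 0 := by
      have := congrArg (fun u : List ℕ => u[0]?) hl'
      rw [List.getElem?_eq_getElem (by simpa using hpos),
        List.getElem?_eq_getElem (by simpa using hpos)] at this
      rw [pre_getElem, pre_getElem] at this
      exact Option.some.inj this
    have := b_zero_ge hβ hα hb
    rw [(aSeq_vals hβ hα).1] at h0
    omega
  · exfalso
    apply hsne
    rw [sWord, if_neg h1, if_neg h2]

/-- Shape of `hatW` on `Lᵃ`. -/
lemma hatW_shape (hβ : 3 < β) (hα : α = 1/β)
    (hb : Tendsto (iSeq α β) (𝓝[<] (1 : ℝ)) (𝓝 b)) {w : List ℕ}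
    (hbr : kk b w < kk (aSeq α β) w) (lam : ℕ) :
    ∃ h : w.length - 1 < w.length,
      hatW (aSeq α β) b lam w = w.take (w.length - 1) ++ [w[w.length - 1] + 1] := by
  set a := aSeq α β with ha
  set n := w.length with hn
  set l := kk a w with hl
  have hl1 : 1 ≤ l := by omega
  have hln : l ≤ n := kk_le a w
  have hn1 : 1 ≤ n := by omega
  refine ⟨by omega, ?_⟩
  have hsw : sWord a b w = w.drop (n - l) := by rw [sWord, if_pos hbr]
  have hdrop : w.drop (n - l) = pre a l := kk_spec (by omega)
  have hulen : (w.drop (n - l)).length = l := by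
    rw [List.length_drop]; omega
  have hne : w.drop (n - l) ≠ [] := by
    intro h
    rw [h] at hulen
    simp at hulen
    omega
  have hPmem : w.drop (n - l) ∈ Pset a := ⟨l, hdrop⟩
  have hlast : (w.drop (n - l)).getLast?.getD 0 = w[n-1]'(by omega) := by
    rw [List.getLast?_eq_getElem?, hulen]
    rw [List.getElem?_eq_getElem (by rw [List.length_drop]; omega)]
    simp only [Option.getD_some]
    rw [List.getElem_drop]
    congr 1
    omega
  rw [hatW, hsw, hulen, hatP, if_neg hne, if_pos hPmem, hlast]
  rw [List.dropLast_eq_take, hulen]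
  rw [← List.append_assoc, ← List.take_add]
  congr 2
  omega

lemma take_concat_self {w : List ℕ} (hne : 0 < w.length) :
    w = w.take (w.length - 1) ++ [w[w.length - 1]'(by omega)] := by
  have hnil : w ≠ [] := by
    intro h; rw [h] at hne; simp at hne
  have h1 := List.dropLast_concat_getLast hnil
  rw [List.getLast_eq_getElem, List.dropLast_eq_take] at h1
  exact h1.symm


/-- `h = (·)^` restricted to `L^a` is injective, with image contained in
`L^ε ∪ L^b`. -/
theorem stmt8 (α β : ℝ) (hβ : 3 < β) (hα : α = 1 / β)
    (b : ℕ → ℕ) (hb : Tendsto (iSeq α β) (𝓝[<] (1 : ℝ)) (𝓝 b)) :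
    Set.InjOn (hatW (aSeq α β) b (lamNat α β))
      {w | w ∈ Lang α β ∧ sWord (aSeq α β) b w ∈ Pset (aSeq α β) ∧
        sWord (aSeq α β) b w ≠ []} ∧
    hatW (aSeq α β) b (lamNat α β) ''
        {w | w ∈ Lang α β ∧ sWord (aSeq α β) b w ∈ Pset (aSeq α β) ∧
          sWord (aSeq α β) b w ≠ []} ⊆
      {w | w ∈ Lang α β ∧ sWord (aSeq α β) b w = []} ∪
      {w | w ∈ Lang α β ∧ sWord (aSeq α β) b w ∈ Pset b ∧ sWord (aSeq α β) b w ≠ []} := by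
  obtain ⟨ha0, ha1⟩ := aSeq_vals hβ hα
  constructor
  · -- Injectivity
    intro w1 h1 w2 h2 heq
    obtain ⟨hw1L, hsw1, hne1⟩ := h1
    obtain ⟨hw2L, hsw2, hne2⟩ := h2
    have hbr1 := branch hβ hα hb hsw1 hne1
    have hbr2 := branch hβ hα hb hsw2 hne2
    obtain ⟨hlt1, hs1⟩ := hatW_shape hβ hα hb hbr1 (lamNat α β)
    obtain ⟨hlt2, hs2⟩ := hatW_shape hβ hα hb hbr2 (lamNat α β)
    rw [hs1, hs2] at heq
    have hlen : w1.length = w2.length := by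
      have := congrArg List.length heq
      simp [List.length_take] at this
      omega
    have htl : (w1.take (w1.length - 1)).length = (w2.take (w2.length - 1)).length := by
      simp [List.length_take]; omega
    obtain ⟨htake, hsing⟩ := List.append_inj heq htl
    have hlast : w1[w1.length - 1]'hlt1 = w2[w2.length - 1]'hlt2 := by
      have := List.head_eq_of_cons_eq hsing
      omega
    calc w1 = w1.take (w1.length - 1) ++ [w1[w1.length - 1]'hlt1] :=
          take_concat_self (by omega)
      _ = w2.take (w2.length - 1) ++ [w2[w2.length - 1]'hlt2] := by rw [htake, hlast]
      _ = w2 := (take_concat_self (by omega)).symm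
  · -- Image
    rintro v ⟨w, hwmem, rfl⟩
    obtain ⟨hwL, hsw, hne⟩ := hwmem
    have hbr : kk b w < kk (aSeq α β) w := branch hβ hα hb hsw hne
    obtain ⟨hlt, hs⟩ := hatW_shape hβ hα hb hbr (lamNat α β)
    have hln : kk (aSeq α β) w ≤ w.length := kk_le (aSeq α β) w
    have hl1 : 1 ≤ kk (aSeq α β) w := by omega
    have hn1 : 1 ≤ w.length := by omega
    obtain ⟨y, hy, hwy⟩ := lang_extract hwL
    have hwyD : ∀ j, j < w.length → w.getD j 0 = iSeq α β y j := fun j hj =>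
      (List.getD_eq_getElem w 0 hj).trans (hwy j hj)
    have hdropa : w.drop (w.length - kk (aSeq α β) w) = pre (aSeq α β) (kk (aSeq α β) w) := kk_spec (by omega)
    have hdropaD : ∀ s, s < kk (aSeq α β) w → w.getD (w.length - kk (aSeq α β) w + s) 0 = (aSeq α β) s := by
      intro s hsl
      have hidx : w.length - kk (aSeq α β) w + s < w.length := by omega
      exact (List.getD_eq_getElem w 0 hidx).trans
        ((drop_eq_pre_iff hln).mp hdropa s hsl hidx)
    have hsa : ∀ s, s < kk (aSeq α β) w → iSeq α β y (w.length - kk (aSeq α β) w + s) = (aSeq α β) s := by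
      intro s hsl
      rw [← hwyD _ (by omega), hdropaD s hsl]
    have hk2 : ∀ K, kk (aSeq α β) w < K → K ≤ w.length →
        ¬ (∀ s, s < K → iSeq α β y (w.length - K + s) = b s) := by
      intro K hlK hKn hall
      have hkg : w.drop (w.length - K) = pre b K := by
        rw [drop_eq_pre_iff hKn]
        intro j hj hidx
        rw [hwy _ hidx, hall j hj]
      have := kk_ge hKn hkg
      omega
    obtain ⟨x', hx'I, hagree, hlastd⟩ := core hβ hα hb hy hn1 hl1 hln hsa hk2
    have hWlen : (hatW (aSeq α β) b (lamNat α β) w).length = w.length := by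
      rw [hs, List.length_append, List.length_take]
      simp
      omega
    have hWgetD : ∀ j, j < w.length → (hatW (aSeq α β) b (lamNat α β) w).getD j 0 =
        if j = w.length - 1 then w.getD (w.length - 1) 0 + 1 else w.getD j 0 := by
      intro j hj
      rw [List.getD_eq_getElem _ 0 (by omega)]
      simp only [hs]
      rcases Nat.lt_or_ge j (w.length - 1) with hjlt | hjge
      · rw [List.getElem_append, dif_pos (by rw [List.length_take]; omega)]
        rw [if_neg (show ¬ j = w.length - 1 by omega), List.getElem_take,
          List.getD_eq_getElem w 0 hj]
      · have hj1 : j = w.length - 1 := by omega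
        subst hj1
        rw [List.getElem_append, dif_neg (by rw [List.length_take]; omega)]
        rw [if_pos rfl]
        have hidx : w.length - 1 - (w.take (w.length - 1)).length = 0 := by
          rw [List.length_take]; omega
        simp only [hidx, List.getElem_singleton]
        rw [List.getD_eq_getElem w 0 (by omega)]
    have hWx' : ∀ j (hj : j < (hatW (aSeq α β) b (lamNat α β) w).length),
        (hatW (aSeq α β) b (lamNat α β) w)[j] = iSeq α β x' j := by
      intro j hj
      have hjn : j < w.length := by omega
      rw [← List.getD_eq_getElem _ 0 hj, hWgetD j hjn]
      rcases Nat.lt_or_ge j (w.length - 1) with hjlt | hjge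
      · rw [if_neg (show ¬ j = w.length - 1 by omega), hwyD _ hjn, ← hagree j hjlt]
      · have hj1 : j = w.length - 1 := by omega
        subst hj1
        rw [if_pos rfl, hlastd, hwyD _ (by omega)]
    have hWL : hatW (aSeq α β) b (lamNat α β) w ∈ Lang α β := lang_of_point hx'I hWx'
    have hwn1D : w.getD (w.length - 1) 0 = (aSeq α β) (kk (aSeq α β) w - 1) := by
      have h2 := hdropaD (kk (aSeq α β) w - 1) (by omega)
      rw [show w.length - kk (aSeq α β) w + (kk (aSeq α β) w - 1) = w.length - 1 by omega] at h2
      exact h2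
    have hkka : kk (aSeq α β) (hatW (aSeq α β) b (lamNat α β) w) = 0 := by
      rw [kk, Nat.findGreatest_eq_zero_iff
        (P := fun k => (hatW (aSeq α β) b (lamNat α β) w).drop ((hatW (aSeq α β) b (lamNat α β) w).length - k) = pre (aSeq α β) k)
        (k := (hatW (aSeq α β) b (lamNat α β) w).length)]
      intro k hk0 hkle heqk
      rw [hWlen] at hkle
      have hgetD : ∀ s, s < k → (hatW (aSeq α β) b (lamNat α β) w).getD (w.length - k + s) 0 = (aSeq α β) s := by
        intro s hsk
        have hidx : (hatW (aSeq α β) b (lamNat α β) w).length - k + s < (hatW (aSeq α β) b (lamNat α β) w).length := by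
          rw [hWlen]; omega
        have h3 := (List.getD_eq_getElem _ 0 hidx).trans
          ((drop_eq_pre_iff (by rw [hWlen]; omega)).mp heqk s hsk hidx)
        rw [show (hatW (aSeq α β) b (lamNat α β) w).length - k + s = w.length - k + s by rw [hWlen]] at h3
        exact h3
      have hlastW : w.getD (w.length - 1) 0 + 1 = (aSeq α β) (k-1) := by
        have h3 := hgetD (k-1) (by omega)
        rw [show w.length - k + (k-1) = w.length - 1 by omega] at h3
        rw [hWgetD (w.length - 1) (by omega), if_pos rfl] at h3
        exact h3
      rcases Nat.lt_or_ge (kk (aSeq α β) w) 2 with hl2 | hl2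
      · -- kk (aSeq α β) w = 1
        have hw0 : w.getD (w.length - 1) 0 = 0 := by
          rw [hwn1D, show kk (aSeq α β) w - 1 = 0 by omega]
          exact ha0
        rw [hw0] at hlastW
        have hk1 : (aSeq α β) (k-1) = 1 := hlastW.symm
        have hkge2 : 2 ≤ k := by
          by_contra hc
          have hkk : k = 1 := by omega
          rw [hkk] at hk1
          simp only [Nat.sub_self] at hk1
          rw [ha0] at hk1
          omega
        have hpat0 : iSeq α β y (w.length - k) = 0 := by
          have h4 := hgetD 0 (by omega)
          rw [Nat.add_zero, hWgetD (w.length - k) (by omega),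
            if_neg (show ¬ w.length - k = w.length - 1 by omega),
            ha0, hwyD _ (by omega)] at h4
          exact h4
        have hpat1 : ∀ s, 1 ≤ s → s ≤ k - 2 → iSeq α β y (w.length - k + s) = 1 := by
          intro s hs1 hs2
          have h4 := hgetD s (by omega)
          rw [hWgetD (w.length - k + s) (by omega),
            if_neg (show ¬ w.length - k + s = w.length - 1 by omega),
            ha1 s hs1, hwyD _ (by omega)] at h4
          exact h4
        have h5 := no_a_pattern hβ hα hy (w.length - k) (k-2) hpat0 hpat1
        rw [show w.length - k + (k-2) + 1 = w.length - 1 by omega] at h5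
        rw [← hwyD _ (by omega), hw0] at h5
        omega
      · -- kk (aSeq α β) w ≥ 2
        have hw1 : w.getD (w.length - 1) 0 = 1 := by
          rw [hwn1D, ha1 (kk (aSeq α β) w - 1) (by omega)]
        rw [hw1] at hlastW
        rcases Nat.eq_zero_or_pos (k-1) with hk1 | hk1
        · rw [hk1, ha0] at hlastW; omega
        · rw [ha1 (k-1) hk1] at hlastW; omega
    by_cases hkb : kk b (hatW (aSeq α β) b (lamNat α β) w) = 0
    · left
      refine ⟨hWL, ?_⟩
      rw [sWord, if_neg (by omega), if_neg (by omega)]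
    · right
      have hkbpos : 0 < kk b (hatW (aSeq α β) b (lamNat α β) w) := by omega
      have hsW : sWord (aSeq α β) b (hatW (aSeq α β) b (lamNat α β) w) =
          (hatW (aSeq α β) b (lamNat α β) w).drop ((hatW (aSeq α β) b (lamNat α β) w).length - kk b (hatW (aSeq α β) b (lamNat α β) w)) := by
        rw [sWord, if_neg (by omega), if_pos (by omega)]
      have hswEq : sWord (aSeq α β) b (hatW (aSeq α β) b (lamNat α β) w) =
          pre b (kk b (hatW (aSeq α β) b (lamNat α β) w)) :=
        hsW.trans (kk_spec hkbpos)
      refine ⟨hWL, ?_, ?_⟩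
      · rw [hswEq]; exact ⟨_, rfl⟩
      · rw [hswEq]
        intro hc
        have := congrArg List.length hc
        simp at this
        omega



end AB
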